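/- For any nonempty closed hemispherical subset W of S^{n+1}, the spherical convex hull of W equals its double spherical polar: s-conv(W) = (s-conv(W))°°. -/

import Mathlib

open scoped RealInnerProductSpace BigOperators
open Real

namespace Sph

/-- Ambient Euclidean space `ℝ^{n+2}` containing the sphere `S^{n+1}`. -/
abbrev E (n : ℕ) := EuclideanSpace ℝ (Fin (n + 2))

/-- The unit sphere `S^{n+1} ⊂ ℝ^{n+2}`. -/
def sph (n : ℕ) : Set (E n) := {x | ‖x‖ = 1}

/-- The closed hemisphere `H(P)` centered at `P`. -/
def hemi {n : ℕ} (P : E n) : Set (E n) := {Q | ‖Q‖ = 1 ∧ 0 ≤ ⟪P, Q⟫}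

/-- The boundary `∂H(P)` of the hemisphere centered at `P`. -/
def hemiBdry {n : ℕ} (P : E n) : Set (E n) := {Q | ‖Q‖ = 1 ∧ ⟪P, Q⟫ = 0}

/-- Geodesic (angular) distance on the unit sphere. -/
noncomputable def gdist {n : ℕ} (P Q : E n) : ℝ := Real.arccos ⟪P, Q⟫

/-- Radial normalization of a vector. -/
noncomputable def nmz {n : ℕ} (x : E n) : E n := ‖x‖⁻¹ • x

/-- The geodesic arc joining `P` and `Q`. -/
noncomputable def arc {n : ℕ} (P Q : E n) : Set (E n) :=
  {X | ∃ t ∈ Set.Icc (0 : ℝ) 1, X = nmz ((1 - t) • P + t • Q)}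

/-- A subset of the sphere is hemispherical if it misses some closed hemisphere. -/
def Hemispherical {n : ℕ} (W : Set (E n)) : Prop := ∃ P ∈ sph n, W ∩ hemi P = ∅

/-- Spherical convexity: a subset of the sphere closed under geodesic arcs. -/
noncomputable def SphConvex {n : ℕ} (W : Set (E n)) : Prop :=
  W ⊆ sph n ∧ ∀ P ∈ W, ∀ Q ∈ W, arc P Q ⊆ W

/-- Interior of `W` relative to the sphere. -/
def sphInterior {n : ℕ} (W : Set (E n)) : Set (E n) :=
  {X | X ∈ W ∧ ∃ U : Set (E n), IsOpen U ∧ X ∈ U ∧ U ∩ sph n ⊆ W}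

/-- Frontier of `W` relative to the sphere. -/
def sphFrontier {n : ℕ} (W : Set (E n)) : Set (E n) :=
  closure W ∩ closure (sph n \ W)

/-- A spherical convex body: closed, hemispherical, spherically convex,
with an interior point. -/
noncomputable def SphConvexBody {n : ℕ} (W : Set (E n)) : Prop :=
  IsClosed W ∧ Hemispherical W ∧ SphConvex W ∧ (sphInterior W).Nonempty

/-- The hemisphere `H(P)` supports `W`. -/
noncomputable def Supports {n : ℕ} (W : Set (E n)) (P : E n) : Prop :=
  P ∈ sph n ∧ W ⊆ hemi P ∧ (sphFrontier W ∩ hemiBdry P).Nonempty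

/-- The width of `W` determined by the supporting hemisphere `H(P)`:
the minimum thickness `π - |PQ|` of lunes `H(P) ∩ H(Q)` over supporting
hemispheres `H(Q)` (so that `W ⊆ H(P) ∩ H(Q)`). -/
noncomputable def widthAt {n : ℕ} (W : Set (E n)) (P : E n) : ℝ :=
  sInf {d | ∃ Q, Supports W Q ∧ d = π - gdist P Q}

/-- `W` is of constant width `ρ`. -/
noncomputable def ConstWidth {n : ℕ} (W : Set (E n)) (ρ : ℝ) : Prop :=
  ∀ P, Supports W P → widthAt W P = ρ

/-- The spherical polar set `W° = ⋂_{P ∈ W} H(P)` (as a subset of the sphere). -/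
def polar {n : ℕ} (W : Set (E n)) : Set (E n) :=
  {Q | ‖Q‖ = 1 ∧ ∀ P ∈ W, 0 ≤ ⟪P, Q⟫}

/-- The diameter of `W`: the supremum of geodesic distances between its points. -/
noncomputable def diam {n : ℕ} (W : Set (E n)) : ℝ :=
  sSup {d | ∃ P ∈ W, ∃ Q ∈ W, d = gdist P Q}

/-- The spherical convex hull: normalized nonnegative convex combinations. -/
noncomputable def sconv {n : ℕ} (W : Set (E n)) : Set (E n) :=
  {X | ∃ (k : ℕ) (t : Fin k → ℝ) (f : Fin k → E n), (∀ i, f i ∈ W) ∧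
    (∀ i, 0 ≤ t i) ∧ (∑ i, t i) = 1 ∧ X = nmz (∑ i, t i • f i)}

/-- Embedding `x ↦ (x, 1)` of `ℝ^{n+1}` into `ℝ^{n+2}`. -/
noncomputable def lift {n : ℕ} (x : EuclideanSpace ℝ (Fin (n + 1))) : E n :=
  (WithLp.equiv 2 (Fin (n + 2) → ℝ)).symm (Fin.snoc (fun i => x i) 1)

/-- The north pole `N = (0, …, 0, 1)`. -/
noncomputable def north (n : ℕ) : E n := EuclideanSpace.single (Fin.last (n + 1)) 1

end Sph

open Sph

private lemma isCompact_convexHull_aux {F : Type*} [NormedAddCommGroup F] [NormedSpace ℝ F]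
    [FiniteDimensional ℝ F] {s : Set F} (hs : IsCompact s) : IsCompact (convexHull ℝ s) := by
  classical
  rcases s.eq_empty_or_nonempty with rfl | ⟨s₀, hs₀⟩
  · simpa [convexHull_empty] using isCompact_empty
  set m := Module.finrank ℝ F + 1 with hm
  set g : (Fin m → ℝ) × (Fin m → F) → F := fun p => ∑ i, p.1 i • p.2 i with hgdef
  set T : Set ((Fin m → ℝ) × (Fin m → F)) := stdSimplex ℝ (Fin m) ×ˢ Set.univ.pi fun _ => s
    with hT_def
  have hT : IsCompact T := (isCompact_stdSimplex ℝ (Fin m)).prod (isCompact_univ_pi fun _ => hs)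
  have hg : Continuous g := by
    apply continuous_finset_sum
    intro i _
    exact ((continuous_apply i).comp continuous_fst).smul
      ((continuous_apply i).comp continuous_snd)
  have key : convexHull ℝ s = g '' T := by
    apply Set.Subset.antisymm
    · intro x hx
      obtain ⟨ι, hι, z, w, hzs, hai, hw0, hw1, hwx⟩ := eq_pos_convex_span_of_mem_convexHull hx
      letI := hι
      have hcard : Fintype.card ι ≤ m := by
        calc Fintype.card ι ≤ Module.finrank ℝ (vectorSpan ℝ (Set.range z)) + 1 :=
              hai.card_le_finrank_succ
          _ ≤ m := by
              have := Submodule.finrank_le (vectorSpan ℝ (Set.range z))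
              omega
      obtain ⟨f⟩ := Function.Embedding.nonempty_of_card_le (β := Fin m) (by simpa using hcard)
      set w' : Fin m → ℝ := fun j => if h : ∃ i, f i = j then w h.choose else 0 with hw'
      set z' : Fin m → F := fun j => if h : ∃ i, f i = j then z h.choose else s₀ with hz'
      have hwf : ∀ i, w' (f i) = w i := by
        intro i
        have h : ∃ i', f i' = f i := ⟨i, rfl⟩
        simp only [hw', dif_pos h]
        exact congrArg w (f.injective h.choose_spec)
      have hzf : ∀ i, z' (f i) = z i := by
        intro i
        have h : ∃ i', f i' = f i := ⟨i, rfl⟩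
        simp only [hz', dif_pos h]
        exact congrArg z (f.injective h.choose_spec)
      have hvan : ∀ j : Fin m, j ∉ Finset.univ.image f → w' j = 0 := by
        intro j hj
        have h : ¬∃ i, f i = j := by
          rintro ⟨i, hi⟩
          exact hj (Finset.mem_image.mpr ⟨i, Finset.mem_univ i, hi⟩)
        simp only [hw', dif_neg h]
      refine ⟨(w', z'), ⟨⟨?_, ?_⟩, ?_⟩, ?_⟩
      · intro j
        by_cases h : ∃ i, f i = j
        · simp only [hw', dif_pos h]; exact (hw0 _).le
        · simp only [hw', dif_neg h]; exact le_refl 0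
      · rw [← Finset.sum_subset (Finset.subset_univ (Finset.univ.image f))
          (fun j _ hj => hvan j hj),
          Finset.sum_image (fun i _ j _ h => f.injective h)]
        simp only [hwf]
        exact hw1
      · intro j _
        by_cases h : ∃ i, f i = j
        · simp only [hz', dif_pos h]; exact hzs ⟨_, rfl⟩
        · simp only [hz', dif_neg h]; exact hs₀
      · show (∑ j, w' j • z' j) = x
        rw [← Finset.sum_subset (Finset.subset_univ (Finset.univ.image f))
          (fun j _ hj => by rw [hvan j hj, zero_smul]),
          Finset.sum_image (fun i _ j _ h => f.injective h)]
        simp only [hwf, hzf]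
        exact hwx
    · rintro _ ⟨⟨w, z⟩, ⟨hw, hz⟩, rfl⟩
      exact (convex_convexHull ℝ s).sum_mem (fun i _ => hw.1 i) hw.2
        (fun i _ => subset_convexHull ℝ s (hz i trivial))
  rw [key]
  exact hT.image hg

theorem sconv_eq_double_polar {n : ℕ} (W : Set (E n)) (hne : W.Nonempty)
    (hcl : IsClosed W) (hsub : W ⊆ sph n) (hh : Hemispherical W) :
    sconv W = polar (polar (sconv W)) := by
  classical
  obtain ⟨P, hPs, hPW⟩ := hh
  have hP1 : ‖P‖ = 1 := hPs
  have hWneg : ∀ Q ∈ W, ⟪P, Q⟫ < 0 := by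
    intro Q hQ
    by_contra h
    push_neg at h
    have hmem : Q ∈ W ∩ hemi P := ⟨hQ, hsub hQ, h⟩
    rw [hPW] at hmem
    exact hmem
  set A := convexHull ℝ W with hA
  have hAconv : Convex ℝ A := convex_convexHull ℝ W
  have hWA : W ⊆ A := subset_convexHull ℝ W
  have hWb : Bornology.IsBounded W := by
    apply (Metric.isBounded_closedBall (x := (0 : E n)) (r := 1)).subset
    intro x hx
    simp [Metric.mem_closedBall, dist_eq_norm, le_of_eq (hsub hx : ‖x‖ = 1)]
  have hWcomp : IsCompact W := Metric.isCompact_of_isClosed_isBounded hcl hWb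
  have hAcomp : IsCompact A := isCompact_convexHull_aux hWcomp
  -- a uniform negative bound on ⟪P, ·⟫ over A
  have hfc : Continuous fun x : E n => ⟪P, x⟫ := continuous_const.inner continuous_id
  obtain ⟨Q0, hQ0W, hmax⟩ := hWcomp.exists_isMaxOn hne hfc.continuousOn
  set ε : ℝ := -⟪P, Q0⟫ with hε_def
  have hε : 0 < ε := by
    have := hWneg Q0 hQ0W
    simp only [hε_def]
    linarith
  have hAneg : ∀ a ∈ A, ⟪P, a⟫ ≤ -ε := by
    have hconv : Convex ℝ {x : E n | ⟪P, x⟫ ≤ -ε} := by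
      apply convex_halfSpace_le (f := fun x : E n => ⟪P, x⟫)
      exact ⟨fun x y => inner_add_right P x y, fun c x => real_inner_smul_right P x c⟩
    have hsub2 : A ⊆ {x : E n | ⟪P, x⟫ ≤ -ε} := by
      apply convexHull_min _ hconv
      intro q hq
      have := hmax hq
      simpa [hε_def] using this
    exact fun a ha => hsub2 ha
  have hAnorm : ∀ a ∈ A, ε ≤ ‖a‖ := by
    intro a ha
    have h1 : ε ≤ -⟪P, a⟫ := by linarith [hAneg a ha]
    have h2 : -⟪P, a⟫ ≤ |⟪P, a⟫| := neg_le_abs _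
    have h3 : |⟪P, a⟫| ≤ ‖P‖ * ‖a‖ := abs_real_inner_le_norm P a
    rw [hP1, one_mul] at h3
    linarith
  have hAne0 : ∀ a ∈ A, a ≠ 0 := by
    intro a ha h0
    have := hAnorm a ha
    rw [h0, norm_zero] at this
    linarith
  -- the cone over A
  set Kset : Set (E n) := {x : E n | ∃ c : ℝ, 0 ≤ c ∧ ∃ a ∈ A, x = c • a} with hKset
  obtain ⟨w0, hw0⟩ := hne
  have hKne : Kset.Nonempty := ⟨0, 0, le_refl 0, w0, hWA hw0, (zero_smul ℝ _).symm⟩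
  have hKsmul : ∀ c : ℝ, 0 < c → ∀ x ∈ Kset, c • x ∈ Kset := by
    rintro c hc x ⟨c', hc', a, ha, rfl⟩
    exact ⟨c * c', mul_nonneg hc.le hc', a, ha, smul_smul c c' a⟩
  have hKadd : ∀ x ∈ Kset, ∀ y ∈ Kset, x + y ∈ Kset := by
    rintro x ⟨c₁, hc₁, a₁, ha₁, rfl⟩ y ⟨c₂, hc₂, a₂, ha₂, rfl⟩
    rcases eq_or_lt_of_le (add_nonneg hc₁ hc₂) with hs | hs
    · have h1 : c₁ = 0 := by linarith
      have h2 : c₂ = 0 := by linarith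
      exact ⟨0, le_refl 0, a₁, ha₁, by simp [h1, h2]⟩
    · set s := c₁ + c₂ with hsdef
      have hsne : s ≠ 0 := ne_of_gt hs
      refine ⟨s, hs.le, (c₁ / s) • a₁ + (c₂ / s) • a₂, ?_, ?_⟩
      · exact hAconv ha₁ ha₂ (div_nonneg hc₁ hs.le) (div_nonneg hc₂ hs.le)
          (by field_simp; exact hsdef.symm)
      · rw [smul_add, smul_smul, smul_smul, mul_div_cancel₀ _ hsne, mul_div_cancel₀ _ hsne]
  -- the cone is closed
  have hKclosed : IsClosed Kset := by
    apply IsSeqClosed.isClosed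
    intro u x hu hux
    choose c hc a ha hua using hu
    obtain ⟨M, hM⟩ := (hux.norm).bddAbove_range
    have hMb : ∀ k, ‖u k‖ ≤ M := fun k => hM ⟨k, rfl⟩
    have hcb : ∀ k, c k ≤ M / ε := by
      intro k
      have h1 : c k * ε ≤ c k * ‖a k‖ :=
        mul_le_mul_of_nonneg_left (hAnorm _ (ha k)) (hc k)
      have h2 : c k * ‖a k‖ = ‖u k‖ := by
        rw [hua k, norm_smul, Real.norm_eq_abs, abs_of_nonneg (hc k)]
      rw [le_div_iff₀ hε]
      calc c k * ε ≤ c k * ‖a k‖ := h1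
        _ = ‖u k‖ := h2
        _ ≤ M := hMb k
    have hcomp : IsCompact ((Set.Icc (0 : ℝ) (M / ε)) ×ˢ A) :=
      isCompact_Icc.prod hAcomp
    have hmem : ∀ k, ((c k, a k) : ℝ × E n) ∈ (Set.Icc (0 : ℝ) (M / ε)) ×ˢ A :=
      fun k => ⟨⟨hc k, hcb k⟩, ha k⟩
    obtain ⟨⟨c₀, a₀⟩, ⟨hc₀, ha₀⟩, φ, hφ, hlim⟩ := hcomp.tendsto_subseq hmem
    have hsmul : Filter.Tendsto (fun k => c (φ k) • a (φ k)) Filter.atTop (nhds (c₀ • a₀)) := by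
      have hcont : Continuous fun p : ℝ × E n => p.1 • p.2 := continuous_smul
      exact (hcont.tendsto (c₀, a₀)).comp hlim
    have hx : x = c₀ • a₀ := by
      have hc1 : Filter.Tendsto (fun k => u (φ k)) Filter.atTop (nhds x) :=
        hux.comp hφ.tendsto_atTop
      have hc2 : (fun k => u (φ k)) = fun k => c (φ k) • a (φ k) := by
        funext k; exact hua (φ k)
      rw [hc2] at hc1
      exact tendsto_nhds_unique hc1 hsmul
    exact ⟨c₀, hc₀.1, a₀, ha₀, hx⟩
  -- package as a ConvexCone
  let K : ConvexCone ℝ (E n) :=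
    { carrier := Kset
      smul_mem' := fun c hc x hx => hKsmul c hc x hx
      add_mem' := fun x hx y hy => hKadd x hx y hy }
  have hKcoe : (K : Set (E n)) = Kset := rfl
  -- membership in sconv for normalized elements of A
  have hnmz_mem : ∀ a ∈ A, nmz a ∈ sconv W := by
    intro a haA
    rw [hA, convexHull_eq] at haA
    obtain ⟨ι, t, wt, z, hw0', hw1, hzW, hcm⟩ := haA
    rw [Finset.centerMass_eq_of_sum_1 _ _ hw1] at hcm
    let e := Fintype.equivFin {i // i ∈ t}
    refine ⟨Fintype.card {i // i ∈ t}, fun i => wt (e.symm i : ι), fun i => z (e.symm i : ι),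
      fun i => hzW _ (e.symm i).2, fun i => hw0' _ (e.symm i).2, ?_, ?_⟩
    · rw [Equiv.sum_comp e.symm (fun j : {i // i ∈ t} => wt (j : ι)), Finset.sum_coe_sort t wt]
      exact hw1
    · rw [Equiv.sum_comp e.symm (fun j : {i // i ∈ t} => wt (j : ι) • z (j : ι)),
        Finset.sum_coe_sort t (fun i => wt i • z i), hcm]
  -- identification of sconv with the cone intersected with the sphere
  have h1 : sconv W = Kset ∩ sph n := by
    ext x
    constructor
    · rintro ⟨k, t, f, hf, ht, hts, rfl⟩
      have hsA : (∑ i, t i • f i) ∈ A := by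
        apply hAconv.sum_mem (fun i _ => ht i) (by simpa using hts)
        exact fun i _ => hWA (hf i)
      have hs0 : (∑ i, t i • f i) ≠ 0 := hAne0 _ hsA
      refine ⟨⟨‖∑ i, t i • f i‖⁻¹, inv_nonneg.mpr (norm_nonneg _), _, hsA, rfl⟩, ?_⟩
      show ‖nmz (∑ i, t i • f i)‖ = 1
      rw [nmz, norm_smul, Real.norm_eq_abs, abs_of_nonneg (inv_nonneg.mpr (norm_nonneg _)),
        inv_mul_cancel₀ (norm_ne_zero_iff.mpr hs0)]
    · rintro ⟨⟨c, hc, a, haA, rfl⟩, hxs⟩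
      have hnorm1 : c * ‖a‖ = 1 := by
        have h1' : ‖c • a‖ = 1 := hxs
        rwa [norm_smul, Real.norm_eq_abs, abs_of_nonneg hc] at h1'
      have hceq : c = ‖a‖⁻¹ := eq_inv_of_mul_eq_one_left hnorm1
      have heq : c • a = nmz a := by rw [hceq, nmz]
      rw [heq]
      exact hnmz_mem a haA
  -- polar of sconv equals the dual cone intersected with the sphere
  set D : Set (E n) := (ProperCone.innerDual Kset : Set (E n)) with hD
  have hDmem : ∀ y : E n, y ∈ D ↔ ∀ x ∈ Kset, 0 ≤ ⟪x, y⟫ := fun y => Iff.rfl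
  have h2 : polar (sconv W) = D ∩ sph n := by
    ext q
    constructor
    · rintro ⟨hq1, hq2⟩
      refine ⟨?_, hq1⟩
      rw [hDmem]
      rintro x ⟨c, hc, a', haA, rfl⟩
      have hnmza : nmz a' ∈ sconv W := hnmz_mem a' haA
      have h0 : 0 ≤ ⟪nmz a', q⟫ := hq2 _ hnmza
      have hna : (0 : ℝ) < ‖a'‖ := by
        have := hAnorm a' haA; linarith
      have h0' : 0 ≤ ⟪a', q⟫ := by
        rw [nmz, real_inner_smul_left] at h0
        nlinarith [inv_pos.mpr hna]
      rw [real_inner_smul_left]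
      exact mul_nonneg hc h0'
    · rintro ⟨hqD, hqs⟩
      refine ⟨hqs, ?_⟩
      intro p hp
      rw [h1] at hp
      exact (hDmem q).mp hqD p hp.1
  -- bipolar theorem
  have hbip : ((ProperCone.innerDual D : Set (E n))) = Kset := by
    let C : ProperCone ℝ (E n) := ⟨K.toPointedCone ⟨0, le_refl 0, w0, hWA hw0, (zero_smul ℝ _).symm⟩, hKclosed⟩
    have hb := ProperCone.innerDual_innerDual C
    calc (ProperCone.innerDual D : Set (E n))
        = (ProperCone.innerDual (ProperCone.innerDual (C : Set (E n)) : Set (E n)) : Set (E n)) := rfl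
      _ = (C : Set (E n)) := by rw [hb]
      _ = Kset := rfl
  -- conclude
  rw [h2]
  ext q
  constructor
  · rintro hq
    rw [h1] at hq
    obtain ⟨hqK, hqs⟩ := hq
    refine ⟨hqs, ?_⟩
    rintro p ⟨hpD, hps⟩
    have hq' : q ∈ (ProperCone.innerDual D : Set (E n)) := by rw [hbip]; exact hqK
    exact ProperCone.mem_innerDual.mp hq' hpD
  · rintro ⟨hq1, hq2⟩
    rw [h1]
    refine ⟨?_, hq1⟩
    rw [← hbip]
    rw [SetLike.mem_coe, ProperCone.mem_innerDual]
    intro p hpD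
    rcases eq_or_ne p 0 with rfl | hp0
    · simp
    · have hnp : (0 : ℝ) < ‖p‖ := norm_pos_iff.mpr hp0
      have hnmzD : nmz p ∈ D ∩ sph n := by
        constructor
        · rw [hDmem]
          intro x hx
          have hxineq := (hDmem p).mp hpD x hx
          rw [nmz, real_inner_smul_right]
          positivity
        · show ‖nmz p‖ = 1
          rw [nmz, norm_smul, Real.norm_eq_abs, abs_of_nonneg (inv_nonneg.mpr (norm_nonneg _)),
            inv_mul_cancel₀ (ne_of_gt hnp)]
      have h0 : 0 ≤ ⟪nmz p, q⟫ := hq2 _ hnmzD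
      rw [nmz, real_inner_smul_left] at h0
      have heq : ⟪p, q⟫ = ‖p‖ * (‖p‖⁻¹ * ⟪p, q⟫) := by field_simp
      rw [heq]
      positivity
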